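/- arXiv:0910.4957 — 2 statements merged into one kernel-verified Lean document; each statement's English description precedes it below -/
import Mathlib

section
/- Let f : [1, ∞) → [0, ∞) be non-increasing, and suppose there exist constants C > 0 and D ≥ 0 such that for all 1 ≤ τ₁ ≤ τ₂: ∫_{τ₁}^{τ₂} f(τ) dτ ≤ C τ₂^{-1} D + C f(τ₁). Then there is a constant C' (depending only on C) such that f(τ) ≤ C' (D + f(1)) τ^{-2} for all τ ≥ 1. (This is the two-step dyadic iteration lemma underlying the τ^{-2} energy decay in the paper.) -/
open MeasureTheory Set Filter

/-- Two-step dyadic iteration lemma: if non-increasing nonnegative `f` satisfies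
`∫_{τ₁}^{τ₂} f ≤ C τ₂⁻¹ D + C f(τ₁)` for all `1 ≤ τ₁ ≤ τ₂`, then
`f(τ) ≤ C' (D + f(1)) τ⁻²`, with `C'` depending only on `C`. -/
theorem stmt_1 (C : ℝ) (hC : 0 < C) :
    ∃ C' : ℝ, 0 < C' ∧
      ∀ (f : ℝ → ℝ) (D : ℝ), 0 ≤ D →
        AntitoneOn f (Ici 1) →
        (∀ τ ∈ Ici (1 : ℝ), 0 ≤ f τ) →
        (∀ τ₁ τ₂ : ℝ, 1 ≤ τ₁ → τ₁ ≤ τ₂ → IntervalIntegrable f volume τ₁ τ₂) →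
        (∀ τ₁ τ₂ : ℝ, 1 ≤ τ₁ → τ₁ ≤ τ₂ →
          (∫ τ in τ₁..τ₂, f τ) ≤ C * τ₂⁻¹ * D + C * f τ₁) →
        ∀ τ : ℝ, 1 ≤ τ → f τ ≤ C' * (D + f 1) / τ ^ 2 := by
  set A : ℝ := 2 * max C 1 with hA
  have hA2 : 2 ≤ A := by
    have : (1:ℝ) ≤ max C 1 := le_max_right _ _
    nlinarith
  have hA2C : 2 * C ≤ A := by
    have : C ≤ max C 1 := le_max_left _ _
    nlinarith
  have hA0 : 0 ≤ A := by linarith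
  refine ⟨2*C + 4*C*A + 4, by positivity, ?_⟩
  intro f D hD hmono hpos hint hineq
  have hf1 : 0 ≤ f 1 := hpos 1 (by simp)
  have hDf : 0 ≤ D + f 1 := by linarith
  -- key pointwise consequence of the integral inequality
  have key : ∀ τ₁ τ₂ : ℝ, 1 ≤ τ₁ → τ₁ ≤ τ₂ →
      (τ₂ - τ₁) * f τ₂ ≤ C * τ₂⁻¹ * D + C * f τ₁ := by
    intro τ₁ τ₂ h1 h2
    have hle : (τ₂ - τ₁) * f τ₂ ≤ ∫ τ in τ₁..τ₂, f τ := by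
      have hm : ∀ x ∈ Set.uIcc τ₁ τ₂, f τ₂ ≤ f x := by
        intro x hx
        rw [Set.uIcc_of_le h2] at hx
        exact hmono (mem_Ici.2 (le_trans h1 hx.1)) (mem_Ici.2 (le_trans h1 h2)) hx.2
      calc (τ₂ - τ₁) * f τ₂ = ∫ _ in τ₁..τ₂, f τ₂ := by
            rw [intervalIntegral.integral_const, smul_eq_mul]
        _ ≤ ∫ τ in τ₁..τ₂, f τ := by
            apply intervalIntegral.integral_mono_on h2 intervalIntegrable_const
              (hint _ _ h1 h2)
            intro x hx
            exact hm x (by rw [Set.uIcc_of_le h2]; exact hx)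
    exact le_trans hle (hineq τ₁ τ₂ h1 h2)
  -- Step 1: f τ ≤ A (D + f 1) / τ, in the form τ * f τ ≤ A * (D + f 1)
  have step1 : ∀ τ : ℝ, 1 ≤ τ → τ * f τ ≤ A * (D + f 1) := by
    intro τ hτ
    have hτ0 : (0:ℝ) < τ := by linarith
    have hfτ : 0 ≤ f τ := hpos τ (mem_Ici.2 hτ)
    rcases le_or_gt τ 2 with h2 | h2
    · have hle1 : f τ ≤ f 1 := hmono (mem_Ici.2 le_rfl) (mem_Ici.2 hτ) hτ
      nlinarith [mul_nonneg (by linarith : (0:ℝ) ≤ 2 - τ) hfτ,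
        mul_nonneg (by linarith : (0:ℝ) ≤ A - 2) hDf]
    · have hk := key 1 τ le_rfl hτ
      have hinv0 : 0 ≤ τ⁻¹ := by positivity
      have hinv1 : τ⁻¹ ≤ 1 := by
        rw [inv_le_one_iff₀]; right; linarith
      nlinarith [mul_nonneg (by linarith : (0:ℝ) ≤ τ - 2) hfτ,
        mul_nonneg (mul_nonneg hC.le hD) (by linarith : (0:ℝ) ≤ 1 - τ⁻¹),
        mul_nonneg (by linarith : (0:ℝ) ≤ A - 2*C) hDf]
  -- Step 2
  intro τ hτ
  have hτ0 : (0:ℝ) < τ := by linarith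
  have hfτ : 0 ≤ f τ := hpos τ (mem_Ici.2 hτ)
  rw [le_div_iff₀ (by positivity)]
  rcases le_or_gt τ 2 with h2 | h2
  · have hle1 : f τ ≤ f 1 := hmono (mem_Ici.2 le_rfl) (mem_Ici.2 hτ) hτ
    have hsq : τ ^ 2 ≤ 4 := by nlinarith
    nlinarith [mul_nonneg (by nlinarith : (0:ℝ) ≤ 4 - τ ^ 2) hfτ,
      mul_nonneg (mul_nonneg hC.le hf1) (by norm_num : (0:ℝ) ≤ 2),
      mul_nonneg (mul_nonneg (mul_nonneg (by norm_num : (0:ℝ) ≤ 4) hC.le) hA0) hDf,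
      mul_nonneg hC.le hDf]
  · have hk := key (τ/2) τ (by linarith) (by linarith)
    have h1 := step1 (τ/2) (by linarith)
    have hinv : τ * τ⁻¹ = 1 := mul_inv_cancel₀ (ne_of_gt hτ0)
    have hk2 : (τ - τ/2) * f τ * τ ≤ (C * τ⁻¹ * D + C * f (τ/2)) * τ :=
      mul_le_mul_of_nonneg_right hk hτ0.le
    have hcd : C * τ⁻¹ * D * τ = C * D := by
      calc C * τ⁻¹ * D * τ = C * D * (τ * τ⁻¹) := by ring
        _ = C * D := by rw [hinv, mul_one]
    have hk3 : (τ/2) * f τ * τ ≤ C * D + C * f (τ/2) * τ := by nlinarith [hk2, hcd]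
    have h1' : 2 * C * ((τ/2) * f (τ/2)) ≤ 2 * C * (A * (D + f 1)) :=
      mul_le_mul_of_nonneg_left h1 (by positivity)
    nlinarith [mul_nonneg hC.le hf1, mul_nonneg hDf (by norm_num : (0:ℝ) ≤ 4)]
end

section
/- Suppose e, h : [1, ∞) → [0, ∞) with e non-increasing, and suppose there exist constants C > 0 such that: (1) for every τ there exists τ' ∈ [τ, 2τ] with h(τ') ≤ C/τ; (2) for all 1 ≤ τ₁ ≤ τ₂, ∫_{τ₁}^{τ₂} e(τ)dτ ≤ C(h(τ₁) + e(τ₁)); and (3) h(τ₂) ≤ C(h(τ₁) + e(τ₁)) for τ₁ ≤ τ₂. Then e(τ) ≤ C' τ^{-2} for all τ ≥ 1, for some constant C' depending only on C and e(1), h(1). (Abstract form of the hierarchy argument: h plays the role of the p=1 weighted flux, e of the energy.) -/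
open MeasureTheory Set Filter

/-- Abstract form of the hierarchy argument: `k` plays the role of the `p = 1`
weighted flux and `e` of the energy.  If (1) on each dyadic interval there is a
good time where `k(τ') ≤ C/τ`, (2) `∫_{τ₁}^{τ₂} e ≤ C (k(τ₁) + e(τ₁))`, and
(3) `k(τ₂) ≤ C (k(τ₁) + e(τ₁))`, then `e(τ) ≤ C' τ⁻²` for a constant `C'`
depending only on `C`, `e(1)`, `k(1)`. -/
theorem stmt_11 (e k : ℝ → ℝ) (C : ℝ) (hC : 0 < C)
    (he0 : ∀ τ ∈ Ici (1 : ℝ), 0 ≤ e τ)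
    (hk0 : ∀ τ ∈ Ici (1 : ℝ), 0 ≤ k τ)
    (hmono : AntitoneOn e (Ici 1))
    (heint : ∀ τ₁ τ₂ : ℝ, 1 ≤ τ₁ → τ₁ ≤ τ₂ → IntervalIntegrable e volume τ₁ τ₂)
    (h1 : ∀ τ : ℝ, 1 ≤ τ → ∃ τ' ∈ Icc τ (2 * τ), k τ' ≤ C / τ)
    (h2 : ∀ τ₁ τ₂ : ℝ, 1 ≤ τ₁ → τ₁ ≤ τ₂ →
      (∫ τ in τ₁..τ₂, e τ) ≤ C * (k τ₁ + e τ₁))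
    (h3 : ∀ τ₁ τ₂ : ℝ, 1 ≤ τ₁ → τ₁ ≤ τ₂ → k τ₂ ≤ C * (k τ₁ + e τ₁)) :
    ∃ C' : ℝ, 0 < C' ∧ ∀ τ : ℝ, 1 ≤ τ → e τ ≤ C' / τ ^ 2 := by
  -- key pointwise estimate: τ * e(2τ) ≤ C (k τ + e τ)
  have key : ∀ τ : ℝ, 1 ≤ τ → τ * e (2 * τ) ≤ C * (k τ + e τ) := by
    intro τ hτ
    have h2τ : τ ≤ 2 * τ := by linarith
    have h2τ1 : (1 : ℝ) ≤ 2 * τ := by linarith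
    have hmon : (∫ _s in τ..(2 * τ), e (2 * τ)) ≤ ∫ s in τ..(2 * τ), e s := by
      apply intervalIntegral.integral_mono_on h2τ intervalIntegrable_const
        (heint τ (2 * τ) hτ h2τ)
      intro s hs
      exact hmono (by exact le_trans hτ hs.1) h2τ1 hs.2
    rw [intervalIntegral.integral_const, smul_eq_mul] at hmon
    calc τ * e (2 * τ) = (2 * τ - τ) * e (2 * τ) := by ring
      _ ≤ ∫ s in τ..(2 * τ), e s := hmon
      _ ≤ C * (k τ + e τ) := h2 τ (2 * τ) hτ h2τ
  set K : ℝ := C * (k 1 + e 1) with hK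
  have hk1 : 0 ≤ k 1 := hk0 1 (mem_Ici.mpr le_rfl)
  have he1 : 0 ≤ e 1 := he0 1 (mem_Ici.mpr le_rfl)
  have hK0 : 0 ≤ K := by positivity
  have hkB : ∀ τ : ℝ, 1 ≤ τ → k τ ≤ K := fun τ hτ => h3 1 τ le_rfl hτ
  have heB : ∀ τ : ℝ, 1 ≤ τ → e τ ≤ e 1 := fun τ hτ =>
    hmono (le_refl (1 : ℝ) : (1:ℝ) ∈ Ici 1) hτ hτ
  -- Step A : e σ ≤ A / σ
  set A : ℝ := 2 * C * (K + e 1) + 2 * e 1 with hA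
  have hA0 : 0 ≤ A := by positivity
  have stepA : ∀ σ : ℝ, 1 ≤ σ → e σ ≤ A / σ := by
    intro σ hσ
    have hσ0 : (0 : ℝ) < σ := by linarith
    rcases le_or_gt σ 2 with hle | hgt
    · have : e σ ≤ e 1 := heB σ hσ
      rw [le_div_iff₀ hσ0]
      nlinarith [he0 σ hσ]
    · have hτ : (1 : ℝ) ≤ σ / 2 := by linarith
      have hk := key (σ / 2) hτ
      have h2 : 2 * (σ / 2) = σ := by ring
      rw [h2] at hk
      have hkb : k (σ / 2) ≤ K := hkB _ hτ
      have heb : e (σ / 2) ≤ e 1 := heB _ hτ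
      rw [le_div_iff₀ hσ0]
      nlinarith
  -- Step B : k σ ≤ B / σ
  set B : ℝ := 2 * C * (C + A) + 2 * K with hB
  have hB0 : 0 < B := by positivity
  have stepB : ∀ σ : ℝ, 1 ≤ σ → k σ ≤ B / σ := by
    intro σ hσ
    have hσ0 : (0 : ℝ) < σ := by linarith
    rcases le_or_gt σ 2 with hle | hgt
    · have : k σ ≤ K := hkB σ hσ
      rw [le_div_iff₀ hσ0]
      nlinarith [hk0 σ hσ, hA0]
    · have hτ : (1 : ℝ) ≤ σ / 2 := by linarith
      obtain ⟨τ', hτ'mem, hτ'k⟩ := h1 (σ / 2) hτ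
      have h2 : 2 * (σ / 2) = σ := by ring
      rw [h2] at hτ'mem
      have hτ'1 : (1 : ℝ) ≤ τ' := le_trans hτ hτ'mem.1
      have hke : k σ ≤ C * (k τ' + e τ') := h3 τ' σ hτ'1 hτ'mem.2
      have heτ' : e τ' ≤ A / (σ / 2) := le_trans
        (hmono hτ hτ'1 hτ'mem.1) (stepA _ hτ)
      have hkd : k τ' ≤ C / (σ / 2) := hτ'k
      have hσ2 : (0 : ℝ) < σ / 2 := by linarith
      rw [le_div_iff₀ hσ0]
      nlinarith [(le_div_iff₀ hσ2).mp hτ'k, (le_div_iff₀ hσ2).mp heτ',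
        hk0 σ hσ]
  -- Step C : e σ ≤ C' / σ²
  refine ⟨4 * C * (B + A) + 4 * e 1, by positivity, ?_⟩
  intro σ hσ
  have hσ0 : (0 : ℝ) < σ := by linarith
  have hσ2 : (0 : ℝ) < σ ^ 2 := by positivity
  rcases le_or_gt σ 2 with hle | hgt
  · have h4 : σ ^ 2 ≤ 4 := by nlinarith
    have : e σ ≤ e 1 := heB σ hσ
    rw [le_div_iff₀ hσ2]
    nlinarith [he0 σ hσ, mul_pos (mul_pos (by norm_num : (0:ℝ) < 4) hC) hB0,
      mul_nonneg (mul_nonneg (by norm_num : (0:ℝ) ≤ 4) hC.le) hA0]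
  · have hτ : (1 : ℝ) ≤ σ / 2 := by linarith
    have hk := key (σ / 2) hτ
    have h2' : 2 * (σ / 2) = σ := by ring
    rw [h2'] at hk
    have hσ2' : (0 : ℝ) < σ / 2 := by linarith
    have hkb : k (σ / 2) ≤ B / (σ / 2) := stepB _ hτ
    have heb : e (σ / 2) ≤ A / (σ / 2) := stepA _ hτ
    rw [le_div_iff₀ hσ2]
    have hkb' := (le_div_iff₀ hσ2').mp hkb
    have heb' := (le_div_iff₀ hσ2').mp heb
    -- hk : (σ/2) * e σ ≤ C * (k(σ/2) + e(σ/2))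
    nlinarith [mul_nonneg (hk0 _ hτ) hσ2'.le, mul_nonneg (he0 _ hτ) hσ2'.le,
      mul_le_mul_of_nonneg_left hk hσ2'.le, he0 σ hσ, he1]
end
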